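/- Assume additionally that f is L-Lipschitz in y, i.e., there is L > 0 with |f(x,y,ξ) − f(x,y′,ξ)| ≤ L·‖y − y′‖ for all x ∈ X, ξ ∈ U, y, y′ ∈ Y (Euclidean norm). Then for all integers s, k with 1 ≤ s ≤ k it holds that opt(s) − opt(k) ≤ L · diam(Y) · ln(k/s), where diam(Y) = max_{y,y′∈Y} ‖y − y′‖. -/

import Mathlib

/-- Worst-case value `sup_{ξ ∈ U} min_{y ∈ S} F(y, ξ)` (minimum written as `sInf` of the image,
which is the minimum for a finite nonempty `S`). -/
noncomputable def worstVal {Eξ Ey : Type*} (U : Set Eξ) (S : Set Ey) (F : Ey → Eξ → ℝ) : ℝ :=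
  sSup ((fun ξ => sInf ((fun y => F y ξ) '' S)) '' U)

/-- The `k`-adaptability value for a fixed first stage:
`inf_{y¹,…,y^k ∈ S} sup_{ξ ∈ U} min_{i ∈ [k]} F(yⁱ, ξ)`. -/
noncomputable def kVal {Eξ Ey : Type*} (U : Set Eξ) (S : Set Ey) (F : Ey → Eξ → ℝ) (k : ℕ) : ℝ :=
  sInf {v | ∃ y : Fin k → Ey, (∀ i, y i ∈ S) ∧ v = worstVal U (Set.range y) F}


open Set

/-- Core duality step: from `n+1` "policies" `g i` (concave in `ξ`), one can drop some index `m`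
so that the worst case over the remaining `n` policies grows by at most `D/(n+1)`. -/
lemma core_step {nξ n : ℕ} (hn : 1 ≤ n) (U : Set (EuclideanSpace ℝ (Fin nξ)))
    (hUconv : Convex ℝ U) (hUne : U.Nonempty)
    (g : Fin (n+1) → EuclideanSpace ℝ (Fin nξ) → ℝ)
    (hbd : BddAbove ((fun ξ => g 0 ξ) '' U))
    (hconc : ∀ i, ConcaveOn ℝ U (g i))
    (D : ℝ) (hD : ∀ i j, ∀ ξ ∈ U, g i ξ - g j ξ ≤ D) :
    ∃ m : Fin (n+1),
      sSup ((fun ξ => sInf ((fun i => g i ξ) '' {m}ᶜ)) '' U) ≤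
      sSup ((fun ξ => sInf (Set.range (fun i => g i ξ))) '' U) + D / (n+1) := by
  haveI : Nontrivial (Fin (n+1)) := Fin.nontrivial_iff_two_le.2 (by omega)
  obtain ⟨M0, hM0⟩ := hbd
  set t : ℝ := sSup ((fun ξ => sInf (Set.range (fun i => g i ξ))) '' U) with ht_def
  -- each value of the inner inf is ≤ t
  have hbd2 : BddAbove ((fun ξ => sInf (Set.range (fun i => g i ξ))) '' U) := by
    refine ⟨M0, ?_⟩
    rintro v ⟨ξ, hξ, rfl⟩
    have h1 : sInf (Set.range (fun i => g i ξ)) ≤ g 0 ξ :=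
      csInf_le (Set.finite_range _).bddBelow ⟨0, rfl⟩
    exact h1.trans (hM0 ⟨ξ, hξ, rfl⟩)
  have ht : ∀ ξ ∈ U, sInf (Set.range (fun i => g i ξ)) ≤ t := fun ξ hξ =>
    le_csSup hbd2 ⟨ξ, hξ, rfl⟩
  have hD0 : 0 ≤ D := by
    obtain ⟨ξ₀, hξ₀⟩ := hUne
    have := hD 0 0 ξ₀ hξ₀; linarith
  -- the convex sets
  set O : Set (Fin (n+1) → ℝ) := Set.univ.pi (fun _ => Ioi t) with hO_def
  set C : Set (Fin (n+1) → ℝ) := {v | ∃ ξ ∈ U, ∀ i, v i ≤ g i ξ} with hC_def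
  have hmemO : ∀ v : Fin (n+1) → ℝ, v ∈ O ↔ ∀ i, t < v i := by
    intro v; simp [hO_def, Set.mem_pi]
  have hOopen : IsOpen O := isOpen_set_pi Set.finite_univ (fun i _ => isOpen_Ioi)
  have hOconv : Convex ℝ O := convex_pi (fun i _ => convex_Ioi t)
  have hCconv : Convex ℝ C := by
    rintro v ⟨ξ₁, hξ₁, h1⟩ w ⟨ξ₂, hξ₂, h2⟩ a b ha hb hab
    refine ⟨a • ξ₁ + b • ξ₂, hUconv hξ₁ hξ₂ ha hb hab, fun i => ?_⟩
    have := (hconc i).2 hξ₁ hξ₂ ha hb hab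
    have h1' : a * v i ≤ a * g i ξ₁ := mul_le_mul_of_nonneg_left (h1 i) ha
    have h2' : b * w i ≤ b * g i ξ₂ := mul_le_mul_of_nonneg_left (h2 i) hb
    simp only [Pi.add_apply, Pi.smul_apply, smul_eq_mul] at this ⊢
    linarith
  have hdisj : Disjoint O C := by
    rw [Set.disjoint_left]
    rintro v hvO ⟨ξ, hξ, hv⟩
    have hne : (Set.range (fun i => g i ξ)).Nonempty := ⟨g 0 ξ, 0, rfl⟩
    obtain ⟨i₀, hi₀⟩ := hne.csInf_mem (Set.finite_range _)
    have : t < sInf (Set.range fun i => g i ξ) := by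
      rw [← hi₀]
      exact lt_of_lt_of_le ((hmemO v).1 hvO i₀) (hv i₀)
    exact absurd (ht ξ hξ) (not_le.2 this)
  obtain ⟨φ, u, hφO, hφC⟩ := geometric_hahn_banach_open hOconv hOopen hCconv hdisj
  -- coordinates of φ
  set lam : Fin (n+1) → ℝ := fun i => φ (Pi.single i 1) with hlam_def
  have hrep : ∀ v : Fin (n+1) → ℝ, φ v = ∑ i, v i * lam i := by
    intro v
    have h3 : ∀ i, (Pi.single i (v i) : Fin (n+1) → ℝ) = v i • (Pi.single i 1 : Fin (n+1) → ℝ) := by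
      intro i
      rw [← Pi.single_smul, smul_eq_mul, mul_one]
    have hv : v = ∑ i, v i • (Pi.single i 1 : Fin (n+1) → ℝ) :=
      calc v = ∑ i, Pi.single i (v i) := (Finset.univ_sum_single v).symm
      _ = ∑ i, v i • (Pi.single i 1 : Fin (n+1) → ℝ) :=
          Finset.sum_congr rfl (fun i _ => h3 i)
    conv_lhs => rw [hv]
    rw [map_sum]
    congr 1; funext i
    rw [map_smul, smul_eq_mul]
  -- the constant vector t+c is in O for c > 0
  have hconst : ∀ c : ℝ, 0 < c → ((fun _ => t + c) : Fin (n+1) → ℝ) ∈ O := by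
    intro c hc; rw [hmemO]; intro i; linarith
  have hφconst : ∀ c : ℝ, 0 < c → (t + c) * (∑ i, lam i) < u := by
    intro c hc
    have := hφO _ (hconst c hc)
    rwa [hrep, ← Finset.mul_sum] at this
  -- λ ≤ 0
  have hlam_nonpos : ∀ i, lam i ≤ 0 := by
    intro i
    by_contra h
    push_neg at h
    set c : ℝ := max 1 ((u - φ (fun _ => t + 1)) / lam i) with hc_def
    have hc1 : (1:ℝ) ≤ c := le_max_left _ _
    have hvmem : ((fun _ => t + 1) + c • (Pi.single i 1 : Fin (n+1) → ℝ)) ∈ O := by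
      rw [hmemO]; intro j
      simp only [Pi.add_apply, Pi.smul_apply, smul_eq_mul]
      rcases eq_or_ne j i with rfl | hji
      · simp only [Pi.single_eq_same, mul_one]; nlinarith
      · rw [Pi.single_eq_of_ne hji, mul_zero]; linarith
    have hlt := hφO _ hvmem
    rw [map_add, map_smul, smul_eq_mul] at hlt
    have hge : (u - φ (fun _ => t + 1)) / lam i ≤ c := le_max_right _ _
    have hle : u - φ (fun _ => t + 1) ≤ c * lam i := by
      rw [div_le_iff₀ h] at hge; linarith
    have hrfl : φ (Pi.single i 1 : Fin (n+1) → ℝ) = lam i := rfl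
    rw [hrfl] at hlt
    linarith
  -- value of φ on C-members coming from ξ
  have hφξ : ∀ ξ ∈ U, u ≤ ∑ i, g i ξ * lam i := by
    intro ξ hξ
    have : ((fun i => g i ξ) : Fin (n+1) → ℝ) ∈ C := ⟨ξ, hξ, fun i => le_rfl⟩
    have := hφC _ this
    rwa [hrep] at this
  -- sum of λ is negative
  have hsum_neg : (∑ i, lam i) < 0 := by
    rcases lt_or_eq_of_le (Finset.sum_nonpos (fun i _ => hlam_nonpos i)) with h | h
    · exact h
    · exfalso
      have hall : ∀ i ∈ Finset.univ, lam i = 0 :=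
        (Finset.sum_eq_zero_iff_of_nonpos (fun i _ => hlam_nonpos i)).1 h
      obtain ⟨ξ₀, hξ₀⟩ := hUne
      have h1 := hφξ ξ₀ hξ₀
      have h2 := hφconst 1 one_pos
      have hz : ∀ v : Fin (n+1) → ℝ, ∑ i, v i * lam i = 0 := by
        intro v
        apply Finset.sum_eq_zero
        intro i hi; rw [hall i hi, mul_zero]
      rw [hz] at h1
      rw [show (∑ i, lam i) = 0 from h, mul_zero] at h2
      linarith
  -- t * Σλ ≤ u
  have htsum : t * (∑ i, lam i) ≤ u := by
    apply le_of_forall_pos_le_add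
    intro ε hε
    have hc : 0 < ε / (-(∑ i, lam i)) := div_pos hε (by linarith)
    have := hφconst _ hc
    have hne2 : (-(∑ i, lam i)) ≠ 0 := ne_of_gt (by linarith)
    have hexp : (t + ε / (-(∑ i, lam i))) * (∑ i, lam i)
        = t * (∑ i, lam i) - ε :=
      calc (t + ε / (-(∑ i, lam i))) * (∑ i, lam i)
          = t * (∑ i, lam i) - (ε / (-(∑ i, lam i))) * (-(∑ i, lam i)) := by ring
      _ = t * (∑ i, lam i) - ε := by rw [div_mul_cancel₀ _ hne2]
    rw [hexp] at this
    linarith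
  -- normalized weights
  set S : ℝ := ∑ i, lam i with hS_def
  set μ : Fin (n+1) → ℝ := fun i => lam i / S with hμ_def
  have hμ_nonneg : ∀ i, 0 ≤ μ i := by
    intro i
    show 0 ≤ lam i / S
    rw [← neg_div_neg_eq]
    exact div_nonneg (by linarith [hlam_nonpos i]) (by linarith)
  have hμ_sum : ∑ i, μ i = 1 := by
    show (∑ i, lam i / S) = 1
    rw [← Finset.sum_div]
    exact div_self (ne_of_lt hsum_neg)
  have hkey : ∀ ξ ∈ U, (∑ i, μ i * g i ξ) ≤ t := by
    intro ξ hξ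
    have h1 : t * S ≤ ∑ i, g i ξ * lam i := le_trans htsum (hφξ ξ hξ)
    have h2 : ∑ i, μ i * g i ξ = (∑ i, g i ξ * lam i) / S := by
      rw [Finset.sum_div]
      congr 1; funext i
      show lam i / S * g i ξ = g i ξ * lam i / S
      ring
    rw [h2, div_le_iff_of_neg hsum_neg]
    exact h1
  -- pick m with μ m ≤ 1/(n+1)
  have hm : ∃ m, μ m ≤ 1 / (n+1 : ℝ) := by
    by_contra h
    push_neg at h
    have : (1:ℝ) < ∑ i, μ i := by
      calc (1:ℝ) = ∑ _i : Fin (n+1), 1/(n+1:ℝ) := by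
            rw [Finset.sum_const, Finset.card_univ, Fintype.card_fin]
            rw [nsmul_eq_mul]; push_cast
            field_simp
      _ < ∑ i, μ i := Finset.sum_lt_sum_of_nonempty Finset.univ_nonempty (fun i _ => h i)
    rw [hμ_sum] at this; linarith
  obtain ⟨m, hmle⟩ := hm
  refine ⟨m, ?_⟩
  -- final bound per ξ
  have hfin : ∀ ξ ∈ U, sInf ((fun i => g i ξ) '' {m}ᶜ) ≤ t + D / (n+1) := by
    intro ξ hξ
    set T : Set ℝ := (fun i => g i ξ) '' {m}ᶜ with hT_def
    have hTne : T.Nonempty := by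
      obtain ⟨i₁, hi₁⟩ := exists_ne m
      exact ⟨g i₁ ξ, i₁, hi₁, rfl⟩
    have hTfin : T.Finite := Set.Finite.image _ (Set.toFinite _)
    obtain ⟨i₁, hi₁mem, hi₁⟩ := hTne.csInf_mem hTfin
    set Mξ : ℝ := sInf T with hM_def
    have hi₁' : g i₁ ξ = Mξ := hi₁
    have hMle : ∀ i, i ≠ m → Mξ ≤ g i ξ := by
      intro i hi
      exact csInf_le hTfin.bddBelow ⟨i, hi, rfl⟩
    -- g m ξ ≥ Mξ - D
    have hgm : Mξ - D ≤ g m ξ := by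
      have h3 := hD i₁ m ξ hξ
      rw [hi₁'] at h3
      linarith
    -- sum bound
    have hsplit : ∑ i, μ i * g i ξ
        = (∑ i ∈ Finset.univ.erase m, μ i * g i ξ) + μ m * g m ξ :=
      (Finset.sum_erase_add _ _ (Finset.mem_univ m)).symm
    have hμm_sum : ∑ i ∈ Finset.univ.erase m, μ i = 1 - μ m := by
      have := Finset.sum_erase_add Finset.univ μ (Finset.mem_univ m)
      rw [hμ_sum] at this; linarith
    have hlow : (1 - μ m) * Mξ ≤ ∑ i ∈ Finset.univ.erase m, μ i * g i ξ := by
      calc (1 - μ m) * Mξ = ∑ i ∈ Finset.univ.erase m, μ i * Mξ := by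
            rw [← Finset.sum_mul, hμm_sum]
      _ ≤ _ := by
            apply Finset.sum_le_sum
            intro i hi
            exact mul_le_mul_of_nonneg_left (hMle i (Finset.ne_of_mem_erase hi)) (hμ_nonneg i)
    have hgm2 : μ m * (Mξ - D) ≤ μ m * g m ξ :=
      mul_le_mul_of_nonneg_left hgm (hμ_nonneg m)
    have htot := hkey ξ hξ
    rw [hsplit] at htot
    -- Mξ - μ m * D ≤ t
    have h1 : Mξ - μ m * D ≤ t := by nlinarith
    have h2 : μ m * D ≤ D / (n+1) := by
      rw [div_eq_mul_inv, mul_comm D]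
      apply mul_le_mul_of_nonneg_right _ hD0
      rw [← one_div]; exact hmle
    linarith
  apply csSup_le
  · obtain ⟨ξ₀, hξ₀⟩ := hUne
    exact ⟨_, ξ₀, hξ₀, rfl⟩
  · rintro v ⟨ξ, hξ, rfl⟩
    exact hfin ξ hξ

open Set

lemma worstVal_mem_Icc {Eξ Ey : Type*} {U : Set Eξ} (hUne : U.Nonempty)
    {S : Set Ey} (hS : S.Finite) (hSne : S.Nonempty) {F : Ey → Eξ → ℝ} {C : ℝ}
    (hC : ∀ y ∈ S, ∀ ξ ∈ U, |F y ξ| ≤ C) :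
    worstVal U S F ∈ Set.Icc (-C) C := by
  have hIcc : ∀ ξ ∈ U, sInf ((fun y => F y ξ) '' S) ∈ Set.Icc (-C) C := by
    intro ξ hξ
    have hne : ((fun y => F y ξ) '' S).Nonempty := hSne.image _
    constructor
    · apply le_csInf hne
      rintro b ⟨y₀, hy₀, rfl⟩
      exact (abs_le.1 (hC y₀ hy₀ ξ hξ)).1
    · obtain ⟨y₀, hy₀, he⟩ := hne.csInf_mem (hS.image _)
      have he' : F y₀ ξ = sInf ((fun y => F y ξ) '' S) := he
      rw [← he']
      exact (abs_le.1 (hC y₀ hy₀ ξ hξ)).2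
  have hb : BddAbove ((fun ξ => sInf ((fun y => F y ξ) '' S)) '' U) := by
    refine ⟨C, ?_⟩
    rintro v ⟨ξ, hξ, rfl⟩
    exact (hIcc ξ hξ).2
  constructor
  · obtain ⟨ξ₀, hξ₀⟩ := hUne
    exact le_trans (hIcc ξ₀ hξ₀).1 (le_csSup hb ⟨ξ₀, hξ₀, rfl⟩)
  · apply csSup_le (hUne.image _)
    rintro v ⟨ξ, hξ, rfl⟩
    exact (hIcc ξ hξ).2

lemma kVal_mem_Icc {Eξ Ey : Type*} {U : Set Eξ} (hUne : U.Nonempty)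
    {S : Set Ey} (hSfin : S.Finite) (hSne : S.Nonempty) {F : Ey → Eξ → ℝ} {C : ℝ}
    (hC : ∀ y ∈ S, ∀ ξ ∈ U, |F y ξ| ≤ C) (k : ℕ) (hk : 1 ≤ k) :
    kVal U S F k ∈ Set.Icc (-C) C := by
  haveI : Nonempty (Fin k) := ⟨⟨0, hk⟩⟩
  set B := {v | ∃ y : Fin k → Ey, (∀ i, y i ∈ S) ∧ v = worstVal U (Set.range y) F} with hB
  have hmem : ∀ v ∈ B, v ∈ Set.Icc (-C) C := by
    rintro v ⟨y, hy, rfl⟩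
    refine worstVal_mem_Icc hUne (Set.finite_range y) (Set.range_nonempty y) ?_
    rintro y' ⟨i, rfl⟩ ξ hξ
    exact hC (y i) (hy i) ξ hξ
  obtain ⟨y₀, hy₀⟩ := hSne
  have hBne : B.Nonempty :=
    ⟨worstVal U (Set.range (fun _ : Fin k => y₀)) F, (fun _ : Fin k => y₀), fun _ => hy₀, rfl⟩
  constructor
  · exact le_csInf hBne (fun v hv => (hmem v hv).1)
  · obtain ⟨v₀, hv₀⟩ := hBne
    exact le_trans (csInf_le ⟨-C, fun v hv => (hmem v hv).1⟩ hv₀) (hmem v₀ hv₀).2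
/-- One-step bound: dropping from `j+1` to `j` policies costs at most `D/(j+1)`. -/
lemma kVal_succ {nξ : ℕ} {Ey : Type*} (U : Set (EuclideanSpace ℝ (Fin nξ)))
    (hUconv : Convex ℝ U) (hUne : U.Nonempty)
    (Y : Set Ey) (S : Set Ey) (hSsub : S ⊆ Y) (hSne : S.Nonempty)
    (F : Ey → EuclideanSpace ℝ (Fin nξ) → ℝ) (C : ℝ)
    (hC : ∀ y ∈ Y, ∀ ξ ∈ U, |F y ξ| ≤ C)
    (hconc : ∀ y ∈ Y, ConcaveOn ℝ U (F y))
    (D : ℝ) (hD : ∀ y ∈ Y, ∀ y' ∈ Y, ∀ ξ ∈ U, F y ξ - F y' ξ ≤ D)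
    (j : ℕ) (hj : 1 ≤ j) :
    kVal U S F j ≤ kVal U S F (j+1) + D / (j+1) := by
  set Bj := {v | ∃ y : Fin j → Ey, (∀ i, y i ∈ S) ∧ v = worstVal U (Set.range y) F} with hBj
  set Bk := {v | ∃ y : Fin (j+1) → Ey, (∀ i, y i ∈ S) ∧ v = worstVal U (Set.range y) F} with hBk
  have hBj_bdd : BddBelow Bj := by
    refine ⟨-C, ?_⟩
    rintro v ⟨y, hy, rfl⟩
    haveI : Nonempty (Fin j) := ⟨⟨0, hj⟩⟩
    refine (worstVal_mem_Icc hUne (Set.finite_range y) (Set.range_nonempty y) ?_).1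
    rintro y' ⟨i, rfl⟩ ξ hξ
    exact hC (y i) (hSsub (hy i)) ξ hξ
  obtain ⟨y₀, hy₀⟩ := hSne
  have hBk_ne : Bk.Nonempty :=
    ⟨worstVal U (Set.range (fun _ : Fin (j+1) => y₀)) F, (fun _ => y₀), fun _ => hy₀, rfl⟩
  have key : ∀ v ∈ Bk, kVal U S F j ≤ v + D / (j+1) := by
    rintro v ⟨y, hy, rfl⟩
    -- apply the core duality step with g i := F (y i)
    have hbd : BddAbove ((fun ξ => F (y 0) ξ) '' U) := by
      refine ⟨C, ?_⟩
      rintro w ⟨ξ, hξ, rfl⟩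
      exact (abs_le.1 (hC (y 0) (hSsub (hy 0)) ξ hξ)).2
    obtain ⟨m, hm⟩ := core_step hj U hUconv hUne (fun i => F (y i)) hbd
      (fun i => hconc (y i) (hSsub (hy i)))
      D (fun i i' ξ hξ => hD (y i) (hSsub (hy i)) (y i') (hSsub (hy i')) ξ hξ)
    -- identify worstVal over range y
    have e1 : worstVal U (Set.range y) F
        = sSup ((fun ξ => sInf (Set.range (fun i => F (y i) ξ))) '' U) := by
      unfold worstVal
      have efun : (fun ξ => sInf ((fun y' => F y' ξ) '' Set.range y))
          = (fun ξ => sInf (Set.range (fun i => F (y i) ξ))) := by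
        funext ξ
        congr 1
        rw [← Set.range_comp]
        rfl
      rw [efun]
    -- the reduced policy tuple
    set y' : Fin j → Ey := fun i => y (m.succAbove i) with hy'_def
    have hy' : ∀ i, y' i ∈ S := fun i => hy _
    have hr : Set.range y' = y '' ({m}ᶜ : Set (Fin (j+1))) := by
      rw [hy'_def]
      rw [show (fun i => y (m.succAbove i)) = y ∘ m.succAbove from rfl]
      rw [Set.range_comp, Fin.range_succAbove]
    have e2 : worstVal U (Set.range y') F
        = sSup ((fun ξ => sInf ((fun i => F (y i) ξ) '' ({m}ᶜ : Set (Fin (j+1))))) '' U) := by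
      unfold worstVal
      have efun : (fun ξ => sInf ((fun y'' => F y'' ξ) '' Set.range y'))
          = (fun ξ => sInf ((fun i => F (y i) ξ) '' ({m}ᶜ : Set (Fin (j+1))))) := by
        funext ξ
        congr 1
        rw [hr, Set.image_image]
      rw [efun]
    have h1 : kVal U S F j ≤ worstVal U (Set.range y') F :=
      csInf_le hBj_bdd ⟨y', hy', rfl⟩
    rw [e2] at h1
    rw [e1]
    have hcast : D / ((j:ℝ)+1) = D / (((j+1:ℕ):ℝ)) := by push_cast; ring
    linarith [h1, hm, hcast]
  have h2 : kVal U S F j - D / (j+1) ≤ kVal U S F (j+1) := by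
    apply le_csInf hBk_ne
    intro v hv
    linarith [key v hv]
  linarith

/-- Harmonic-to-logarithm estimate. -/
lemma one_div_le_log_succ (k : ℕ) (hk : 1 ≤ k) :
    1 / ((k:ℝ) + 1) ≤ Real.log ((k:ℝ)+1) - Real.log k := by
  have hkpos : (0:ℝ) < k := by exact_mod_cast hk
  have h := Real.log_le_sub_one_of_pos (show (0:ℝ) < (k:ℝ)/((k:ℝ)+1) by positivity)
  rw [Real.log_div (ne_of_gt hkpos) (by positivity)] at h
  have he : (k:ℝ)/((k:ℝ)+1) - 1 = -(1/((k:ℝ)+1)) := by field_simp; ring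
  rw [he] at h
  linarith

/-- Telescoped chain bound. -/
lemma kVal_chain {Eξ Ey : Type*} (U : Set Eξ) (S : Set Ey)
    (F : Ey → Eξ → ℝ) (D : ℝ) (hD0 : 0 ≤ D)
    (hstep : ∀ j : ℕ, 1 ≤ j → kVal U S F j ≤ kVal U S F (j+1) + D / (j+1)) :
    ∀ s k : ℕ, 1 ≤ s → s ≤ k →
      kVal U S F s ≤ kVal U S F k + D * (Real.log k - Real.log s) := by
  intro s k hs hsk
  induction k, hsk using Nat.le_induction with
  | base => simp
  | succ k hk ih =>
    have hk1 : 1 ≤ k := le_trans hs hk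
    have h1 := hstep k hk1
    have h2 := one_div_le_log_succ k hk1
    have h3 : D / ((k:ℝ)+1) ≤ D * (Real.log ((k:ℝ)+1) - Real.log k) := by
      calc D / ((k:ℝ)+1) = D * (1/((k:ℝ)+1)) := by ring
      _ ≤ _ := mul_le_mul_of_nonneg_left h2 hD0
    push_cast
    linarith

/-- If `f` is additionally `L`-Lipschitz in `y` (Euclidean norm), then for all
integers `1 ≤ s ≤ k` one has `opt(s) − opt(k) ≤ L · diam(Y) · ln(k/s)`. -/
theorem stmt_3 (nx ny nξ : ℕ) (hnx : 0 < nx) (hny : 0 < ny) (hnξ : 0 < nξ)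
    (X : Set (EuclideanSpace ℝ (Fin nx))) (hXcomp : IsCompact X) (hXne : X.Nonempty)
    (Y : Set (EuclideanSpace ℝ (Fin ny))) (hYfin : Y.Finite) (hYne : Y.Nonempty)
    (hYint : ∀ y ∈ Y, ∀ i, ∃ z : ℤ, y i = (z : ℝ))
    (Yx : EuclideanSpace ℝ (Fin nx) → Set (EuclideanSpace ℝ (Fin ny)))
    (hYxsub : ∀ x ∈ X, Yx x ⊆ Y) (hYxne : ∀ x ∈ X, (Yx x).Nonempty)
    (U : Set (EuclideanSpace ℝ (Fin nξ))) (hUcomp : IsCompact U) (hUconv : Convex ℝ U)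
    (hUne : U.Nonempty)
    (f : EuclideanSpace ℝ (Fin nx) → EuclideanSpace ℝ (Fin ny) →
      EuclideanSpace ℝ (Fin nξ) → ℝ)
    (hfcont : Continuous fun p : EuclideanSpace ℝ (Fin nx) × EuclideanSpace ℝ (Fin ny) ×
      EuclideanSpace ℝ (Fin nξ) => f p.1 p.2.1 p.2.2)
    (hconc : ∀ x ∈ X, ∀ y ∈ Y, ConcaveOn ℝ U (f x y))
    (L : ℝ) (hL : 0 < L)
    (hlip : ∀ x ∈ X, ∀ ξ ∈ U, ∀ y ∈ Y, ∀ y' ∈ Y, |f x y ξ - f x y' ξ| ≤ L * ‖y - y'‖) :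
    ∀ s k : ℕ, 1 ≤ s → s ≤ k →
      sInf ((fun x => kVal U (Yx x) (f x) s) '' X) -
        sInf ((fun x => kVal U (Yx x) (f x) k) '' X) ≤
      L * Metric.diam Y * Real.log ((k : ℝ) / (s : ℝ)) := by
  intro s k hs hsk
  -- global bound on |f| over X × Y × U
  have hKcomp : IsCompact (X ×ˢ (Y ×ˢ U)) := hXcomp.prod ((hYfin.isCompact).prod hUcomp)
  obtain ⟨C, hCb⟩ := hKcomp.exists_bound_of_continuousOn hfcont.continuousOn
  have hC : ∀ x ∈ X, ∀ y ∈ Y, ∀ ξ ∈ U, |f x y ξ| ≤ C := by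
    intro x hx y hy ξ hξ
    have := hCb (x, y, ξ) ⟨hx, hy, hξ⟩
    rwa [Real.norm_eq_abs] at this
  set D : ℝ := L * Metric.diam Y with hD_def
  have hD0 : 0 ≤ D := mul_nonneg (le_of_lt hL) Metric.diam_nonneg
  -- Lipschitz-diameter bound
  have hDb : ∀ x ∈ X, ∀ y ∈ Y, ∀ y' ∈ Y, ∀ ξ ∈ U, f x y ξ - f x y' ξ ≤ D := by
    intro x hx y hy y' hy' ξ hξ
    have h1 := hlip x hx ξ hξ y hy y' hy'
    have h2 : ‖y - y'‖ ≤ Metric.diam Y := by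
      rw [← dist_eq_norm]
      exact Metric.dist_le_diam_of_mem hYfin.isBounded hy hy'
    have h3 : L * ‖y - y'‖ ≤ D := mul_le_mul_of_nonneg_left h2 (le_of_lt hL)
    have h4 := (abs_le.1 h1).2
    linarith
  -- pointwise chain bound at each x
  have hpt : ∀ x ∈ X, kVal U (Yx x) (f x) s
      ≤ kVal U (Yx x) (f x) k + D * (Real.log k - Real.log s) := by
    intro x hx
    refine kVal_chain U (Yx x) (f x) D hD0 ?_ s k hs hsk
    intro j hj
    exact kVal_succ U hUconv hUne Y (Yx x) (hYxsub x hx) (hYxne x hx) (f x) C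
      (fun y hy ξ hξ => hC x hx y hy ξ hξ)
      (fun y hy => hconc x hx y hy)
      D (fun y hy y' hy' ξ hξ => hDb x hx y hy y' hy' ξ hξ) j hj
  -- assemble the two infima
  set As := (fun x => kVal U (Yx x) (f x) s) '' X with hAs
  set Ak := (fun x => kVal U (Yx x) (f x) k) '' X with hAk
  have hAs_bdd : BddBelow As := by
    refine ⟨-C, ?_⟩
    rintro v ⟨x, hx, rfl⟩
    exact (kVal_mem_Icc hUne (hYfin.subset (hYxsub x hx)) (hYxne x hx)
      (fun y hy ξ hξ => hC x hx y (hYxsub x hx hy) ξ hξ) s hs).1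
  obtain ⟨x₀, hx₀⟩ := hXne
  have hAk_ne : Ak.Nonempty := ⟨_, x₀, hx₀, rfl⟩
  set c : ℝ := D * (Real.log k - Real.log s) with hc_def
  have h1 : ∀ a ∈ Ak, sInf As ≤ a + c := by
    rintro a ⟨x, hx, rfl⟩
    exact le_trans (csInf_le hAs_bdd ⟨x, hx, rfl⟩) (hpt x hx)
  have h2 : sInf As - c ≤ sInf Ak := by
    apply le_csInf hAk_ne
    intro a ha
    linarith [h1 a ha]
  have hs0 : ((s:ℝ)) ≠ 0 := by
    have : (0:ℝ) < s := by exact_mod_cast hs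
    exact ne_of_gt this
  have hk0 : ((k:ℝ)) ≠ 0 := by
    have : (0:ℝ) < k := by exact_mod_cast (le_trans hs hsk)
    exact ne_of_gt this
  rw [Real.log_div hk0 hs0]
  have : L * Metric.diam Y * (Real.log k - Real.log s) = c := by rw [hc_def, hD_def]
  linarith [h2, this]
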